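/- Let α = (√5 - 1)/2 and let F_n be the Fibonacci numbers. Then lim_{n→∞} F_n² · (2 - 2cos(2π F_n α)) = 4π²/5. -/

import Mathlib

open Real Filter

lemma fib_mul_alpha_key (α : ℝ) (hα2 : α ^ 2 = 1 - α) :
    ∀ n : ℕ, (Nat.fib (n + 1) : ℝ) * α + (-α) ^ (n + 1) = Nat.fib n := by
  intro n
  induction n using Nat.twoStepInduction with
  | zero => simp
  | one => push_cast [Nat.fib_one]; linear_combination hα2
  | more n ih1 ih2 =>
      have h : (Nat.fib (n + 3) : ℝ) = Nat.fib (n + 2) + Nat.fib (n + 1) := by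
        push_cast [Nat.fib_add_two]; ring
      have h2' : (Nat.fib (n + 2) : ℝ) = Nat.fib (n + 1) + Nat.fib n := by
        push_cast [Nat.fib_add_two]; ring
      rw [h]
      linear_combination - h2' + ih1 + ih2 + (-α) ^ (n + 1) * hα2

/-- For the golden mean `α = (√5 - 1)/2` and the Fibonacci numbers `F n`,
`F n ^ 2 * (2 - 2 cos (2π F n α)) → 4π²/5` as `n → ∞`. -/
theorem fib_sq_mul_two_sub_cos_tendsto (α : ℝ) (hα : α = (Real.sqrt 5 - 1) / 2) :
    Tendsto (fun n : ℕ => (Nat.fib n : ℝ) ^ 2 *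
      (2 - 2 * Real.cos (2 * Real.pi * (Nat.fib n : ℝ) * α)))
      atTop (nhds (4 * Real.pi ^ 2 / 5)) := by
  have h5 : Real.sqrt 5 ^ 2 = 5 := Real.sq_sqrt (by norm_num)
  have h5pos : (0:ℝ) < Real.sqrt 5 := Real.sqrt_pos.mpr (by norm_num)
  have hαpos : 0 < α := by rw [hα]; nlinarith
  have hαlt : α < 1 := by rw [hα]; nlinarith
  have hα2 : α ^ 2 = 1 - α := by rw [hα]; nlinarith
  have key := fib_mul_alpha_key α hα2
  have hgold : goldenRatio * α = 1 := by
    rw [hα]; unfold goldenRatio; nlinarith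
  have hconj : goldenConj = -α := by
    rw [hα]; unfold goldenConj; ring
  -- the square of `fib n * (-α)^n`
  have hsq : ∀ n : ℕ, ((Nat.fib n : ℝ) * (-α) ^ n) ^ 2
      = (1 - 2 * (-α ^ 2) ^ n + (α ^ 4) ^ n) / 5 := by
    intro n
    have hb := Real.coe_fib_eq n
    rw [hb, hconj]
    have h1 : (goldenRatio ^ n - (-α) ^ n) / Real.sqrt 5 * (-α) ^ n
        = ((goldenRatio * (-α)) ^ n - ((-α) * (-α)) ^ n) / Real.sqrt 5 := by
      rw [mul_pow, mul_pow]; ring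
    rw [h1]
    have h2 : (goldenRatio * (-α)) ^ n = (-1 : ℝ) ^ n := by
      rw [show goldenRatio * (-α) = -(goldenRatio * α) by ring, hgold]
    have h3 : ((-α) * (-α) : ℝ) ^ n = (α ^ 2) ^ n := by
      congr 1; ring
    rw [h2, h3, div_pow, h5]
    congr 1
    have h4 : ((-1 : ℝ) ^ n) ^ 2 = 1 := by
      rw [← pow_mul, mul_comm, pow_mul]; norm_num
    have h6 : (-1 : ℝ) ^ n * (α ^ 2) ^ n = (-α ^ 2) ^ n := by
      rw [← mul_pow]; congr 1; ring
    have h7 : ((α ^ 2 : ℝ) ^ n) ^ 2 = (α ^ 4) ^ n := by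
      rw [← pow_mul, Nat.mul_comm, pow_mul]; congr 1; ring
    nlinarith [h4, h6, h7]
  have habs1 : |(-α ^ 2 : ℝ)| < 1 := by
    rw [abs_neg, abs_of_pos (by positivity)]; nlinarith
  have habs2 : |(α ^ 4 : ℝ)| < 1 := by
    rw [abs_of_pos (by positivity)]; nlinarith
  have habs3 : |(-α : ℝ)| < 1 := by rw [abs_neg, abs_of_pos hαpos]; exact hαlt
  have L1 : Tendsto (fun n : ℕ => ((Nat.fib n : ℝ) * (-α) ^ n) ^ 2) atTop (nhds (1/5)) := by
    have h : Tendsto (fun n : ℕ => (1 - 2 * (-α ^ 2 : ℝ) ^ n + (α ^ 4) ^ n) / 5) atTop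
        (nhds ((1 - 2 * 0 + 0) / 5)) :=
      (((tendsto_const_nhds.sub
        ((tendsto_pow_atTop_nhds_zero_of_abs_lt_one habs1).const_mul 2)).add
        (tendsto_pow_atTop_nhds_zero_of_abs_lt_one habs2)).div_const 5)
    norm_num at h
    exact h.congr fun n => (hsq n).symm
  have hπ : (0:ℝ) < π := Real.pi_pos
  have htne : ∀ n : ℕ, π * (-α) ^ n ≠ 0 := fun n =>
    mul_ne_zero hπ.ne' (pow_ne_zero _ (neg_ne_zero.mpr hαpos.ne'))
  have L2 : Tendsto (fun n : ℕ => Real.sin (π * (-α) ^ n) / (π * (-α) ^ n)) atTop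
      (nhds 1) := by
    have hd := Real.hasDerivAt_sin 0
    rw [Real.cos_zero, hasDerivAt_iff_tendsto_slope] at hd
    have ht : Tendsto (fun n : ℕ => π * (-α) ^ n) atTop (nhdsWithin (0:ℝ) {(0:ℝ)}ᶜ) := by
      apply tendsto_nhdsWithin_of_tendsto_nhds_of_eventually_within
      · have h := (tendsto_pow_atTop_nhds_zero_of_abs_lt_one habs3).const_mul π
        simpa using h
      · exact Eventually.of_forall fun n => htne n
    have h := hd.comp ht
    refine h.congr fun n => ?_
    simp [Function.comp, slope_def_field, Real.sin_zero]
  have Lfull : Tendsto (fun n : ℕ => 4 * π ^ 2 *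
      (((Nat.fib n : ℝ) * (-α) ^ n) ^ 2 *
        (Real.sin (π * (-α) ^ n) / (π * (-α) ^ n)) ^ 2)) atTop
      (nhds (4 * π ^ 2 * (1/5 * 1 ^ 2))) :=
    (L1.mul (L2.pow 2)).const_mul _
  have hval : (4 * π ^ 2 / 5 : ℝ) = 4 * π ^ 2 * (1/5 * 1 ^ 2) := by ring
  rw [hval]
  refine Tendsto.congr' ?_ Lfull
  filter_upwards [eventually_ge_atTop 1] with n hn
  obtain ⟨m, rfl⟩ := Nat.exists_eq_succ_of_ne_zero (by omega : n ≠ 0)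
  have hcos : Real.cos (2 * π * (Nat.fib (m + 1) : ℝ) * α)
      = Real.cos (2 * (π * (-α) ^ (m + 1))) := by
    have h := key m
    have heq : 2 * π * (Nat.fib (m + 1) : ℝ) * α
        = (Nat.fib m : ℝ) * (2 * π) - 2 * (π * (-α) ^ (m + 1)) := by
      linear_combination (2 * π) * h
    rw [heq, Real.cos_nat_mul_two_pi_sub]
  simp only [hcos]
  set F : ℝ := (Nat.fib (m + 1) : ℝ) with hF
  set y : ℝ := π * (-α) ^ (m + 1) with hy
  have hyne : y ≠ 0 := htne (m + 1)
  have hsc := Real.sin_sq_add_cos_sq y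
  rw [Real.cos_two_mul]
  have e1 : 4 * π ^ 2 * ((F * (-α) ^ (m + 1)) ^ 2 * (Real.sin y / y) ^ 2)
      = 4 * F ^ 2 * Real.sin y ^ 2 := by
    have hy2 : (π * (-α) ^ (m + 1)) ^ 2 = y ^ 2 := by rw [hy]
    calc 4 * π ^ 2 * ((F * (-α) ^ (m + 1)) ^ 2 * (Real.sin y / y) ^ 2)
        = 4 * F ^ 2 * Real.sin y ^ 2 * ((π * (-α) ^ (m + 1)) ^ 2 / y ^ 2) := by ring
      _ = 4 * F ^ 2 * Real.sin y ^ 2 := by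
        rw [hy2, div_self (pow_ne_zero 2 hyne), mul_one]
  rw [e1]
  linear_combination (4 * F ^ 2) * hsc
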